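/- There exist constants 0 < c < C such that for all n ≥ 3 and all positive integers a₁,…,a_n: c·q_n/a₁ ≤ N(𝟏, a₁…a_n) ≤ C·q_n/a₁ and c·q_n ≤ N(𝟐, a₁…a_n) ≤ C·q_n, where q_n is the continued fraction denominator of a₁…a_n and N(𝐭, ·) is the admissible path count v_𝐭 Â_{a₁}⋯Â_{a_n}(1,1,1)ᵀ. -/
import Mathlib


/-- `Â_k` is the 3×3 matrix with rows `(0,1,0)`, `(k+1,0,k)`, `(k,0,k−1)`. -/
def Ahat (k : ℕ) : Matrix (Fin 3) (Fin 3) ℤ :=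
  !![0, 1, 0; (k : ℤ) + 1, 0, (k : ℤ); (k : ℤ), 0, (k : ℤ) - 1]

/-- `N(𝐭, a₁…a_n) = v_𝐭 Â_{a₁} ⋯ Â_{a_n} (1,1,1)ᵀ` (`𝐭 = 0,1,2` for types 𝟏, 𝟐, 𝟑). -/
def pathCount (t : Fin 3) (l : List ℕ) : ℤ :=
  ((l.map Ahat).prod.mulVec fun _ => 1) t

/-- Continued fraction denominators: `q₀ = 1`, `q₁ = a₁`,
`q_{j+1} = a_{j+1} q_j + q_{j-1}` (here `a 0 = a₁`, `a 1 = a₂`, ...). -/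
def cfDenom (a : ℕ → ℕ) : ℕ → ℕ
  | 0 => 1
  | 1 => a 0
  | n + 2 => a (n + 1) * cfDenom a (n + 1) + cfDenom a n

/-! ### Auxiliary definitions -/

/-- The vector `Â_{a₁}⋯Â_{a_n}(1,1,1)ᵀ`. -/
def wvec (l : List ℕ) : Fin 3 → ℤ := (l.map Ahat).prod.mulVec fun _ => 1

lemma pathCount_eq (t : Fin 3) (l : List ℕ) : pathCount t l = wvec l t := rfl

/-- The 2×2 continuant matrix product. -/
def Mc (l : List ℕ) : Matrix (Fin 2) (Fin 2) ℤ :=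
  (l.map fun a => !![(a : ℤ), 1; 1, 0]).prod

lemma wvec_nil (t : Fin 3) : wvec [] t = 1 := by
  simp [wvec, Matrix.one_mulVec]

lemma wvec_cons (a : ℕ) (l : List ℕ) :
    wvec (a :: l) 0 = wvec l 1 ∧
    wvec (a :: l) 1 = ((a : ℤ) + 1) * wvec l 0 + (a : ℤ) * wvec l 2 ∧
    wvec (a :: l) 2 = (a : ℤ) * wvec l 0 + ((a : ℤ) - 1) * wvec l 2 := by
  have h : wvec (a :: l) = (Ahat a).mulVec (wvec l) := by
    simp [wvec, Matrix.mulVec_mulVec]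
  refine ⟨?_, ?_, ?_⟩ <;>
    simp [h, Ahat, Matrix.mulVec, dotProduct, Fin.sum_univ_three] <;> ring

lemma Mc_nil : Mc [] 0 0 = 1 ∧ Mc [] 1 0 = 0 := by
  constructor <;> simp [Mc]

lemma Mc_cons (a : ℕ) (l : List ℕ) :
    Mc (a :: l) 0 0 = (a : ℤ) * Mc l 0 0 + Mc l 1 0 ∧
    Mc (a :: l) 1 0 = Mc l 0 0 := by
  have h : Mc (a :: l) = !![(a : ℤ), 1; 1, 0] * Mc l := by
    simp [Mc]
  constructor <;> simp [h, Matrix.mul_apply, Fin.sum_univ_two]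

lemma Mc_pos {l : List ℕ} (h : ∀ x ∈ l, 1 ≤ x) :
    1 ≤ Mc l 0 0 ∧ 0 ≤ Mc l 1 0 ∧ Mc l 1 0 ≤ Mc l 0 0 := by
  induction l with
  | nil => simp [Mc_nil.1, Mc_nil.2]
  | cons a t ih =>
    have ha : 1 ≤ a := h a (by simp)
    have ha' : (1 : ℤ) ≤ (a : ℤ) := by exact_mod_cast ha
    obtain ⟨h1, h2, h3⟩ := ih (fun x hx => h x (by simp [hx]))
    obtain ⟨c1, c2⟩ := Mc_cons a t
    refine ⟨?_, ?_, ?_⟩ <;> simp only [c1, c2] <;> nlinarith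

lemma wvec_pos {l : List ℕ} (h : ∀ x ∈ l, 1 ≤ x) :
    1 ≤ wvec l 0 ∧ 1 ≤ wvec l 1 ∧ 1 ≤ wvec l 2 := by
  induction l with
  | nil => simp [wvec_nil]
  | cons a t ih =>
    have ha : 1 ≤ a := h a (by simp)
    have ha' : (1 : ℤ) ≤ (a : ℤ) := by exact_mod_cast ha
    obtain ⟨h0, h1, h2⟩ := ih (fun x hx => h x (by simp [hx]))
    obtain ⟨c0, c1, c2⟩ := wvec_cons a t
    refine ⟨?_, ?_, ?_⟩
    · rw [c0]; exact h1
    · rw [c1]; nlinarith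
    · rw [c2]; nlinarith

/-- The key exact identities: `x + z = 2K₁` and `y − z = 2K₂`. -/
lemma wvec_Mc (l : List ℕ) :
    wvec l 0 + wvec l 2 = 2 * Mc l 0 0 ∧ wvec l 1 - wvec l 2 = 2 * Mc l 1 0 := by
  induction l with
  | nil => simp [wvec_nil, Mc_nil.1, Mc_nil.2]
  | cons a t ih =>
    obtain ⟨h1, h2⟩ := ih
    obtain ⟨c0, c1, c2⟩ := wvec_cons a t
    obtain ⟨m1, m2⟩ := Mc_cons a t
    constructor
    · rw [c0, c2, m1]; nlinarith
    · rw [c1, c2, m2]; nlinarith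

/-- The recursion for the first coordinate. -/
lemma wvec_zero_rec (a : ℕ) (t : List ℕ) :
    wvec (a :: t) 0 = 2 * Mc t 0 0 + 2 * Mc t 1 0 - wvec t 0 := by
  obtain ⟨c0, _, _⟩ := wvec_cons a t
  obtain ⟨h1, h2⟩ := wvec_Mc t
  rw [c0]; linarith

set_option maxHeartbeats 1600000 in
/-- Bounds for lists of length ≥ 2. -/
lemma wvec_bounds (a b : ℕ) (t : List ℕ) (ha : 1 ≤ a) (hb : 1 ≤ b)
    (ht : ∀ x ∈ t, 1 ≤ x) :
    Mc (b :: t) 0 0 ≤ wvec (a :: b :: t) 0 ∧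
    wvec (a :: b :: t) 0 ≤ 4 * Mc (b :: t) 0 0 ∧
    Mc (a :: b :: t) 0 0 ≤ wvec (a :: b :: t) 1 ∧
    wvec (a :: b :: t) 1 ≤ 4 * Mc (a :: b :: t) 0 0 ∧
    (a : ℤ) * Mc (b :: t) 0 0 ≤ Mc (a :: b :: t) 0 0 ∧
    Mc (a :: b :: t) 0 0 ≤ 2 * (a : ℤ) * Mc (b :: t) 0 0 := by
  have ha' : (1 : ℤ) ≤ (a : ℤ) := by exact_mod_cast ha
  have hb' : (1 : ℤ) ≤ (b : ℤ) := by exact_mod_cast hb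
  have hm : ∀ x ∈ b :: t, 1 ≤ x := by
    intro x hx; rcases List.mem_cons.mp hx with h | h
    · exact h ▸ hb
    · exact ht x h
  obtain ⟨Kt1, Kt2, Kt3⟩ := Mc_pos ht
  obtain ⟨Km1, Km2, Km3⟩ := Mc_pos hm
  obtain ⟨wt0, _, _⟩ := wvec_pos ht
  obtain ⟨wm0, _, _⟩ := wvec_pos hm
  obtain ⟨mcm1, mcm2⟩ := Mc_cons b t
  obtain ⟨mcl1, mcl2⟩ := Mc_cons a (b :: t)
  have recl := wvec_zero_rec a (b :: t)
  have recm := wvec_zero_rec b t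
  -- y identity for l
  obtain ⟨idl1, idl2⟩ := wvec_Mc (a :: b :: t)
  -- bounds on x of l
  have hx_up : wvec (a :: b :: t) 0 ≤ 2 * Mc (b :: t) 0 0 + 2 * Mc (b :: t) 1 0 - 1 := by
    rw [recl]; linarith
  have hx_lo : Mc (b :: t) 0 0 ≤ wvec (a :: b :: t) 0 := by
    rw [recl, recm]
    -- wvec l 0 = 2 K1m + 2 K2m − (2 K1t + 2 K2t − wvec t 0), K2m = K1t
    rw [mcm2]
    nlinarith
  have hx_up4 : wvec (a :: b :: t) 0 ≤ 4 * Mc (b :: t) 0 0 := by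
    have := Mc_pos hm
    nlinarith [hx_up]
  -- y = 2 K1l + 2 K1m − x
  have hy_eq : wvec (a :: b :: t) 1 =
      2 * Mc (a :: b :: t) 0 0 + 2 * Mc (b :: t) 0 0 - wvec (a :: b :: t) 0 := by
    rw [mcl2] at idl2
    linarith
  have hK1l : Mc (a :: b :: t) 0 0 = (a : ℤ) * Mc (b :: t) 0 0 + Mc (b :: t) 1 0 := mcl1
  have hy_lo : Mc (a :: b :: t) 0 0 ≤ wvec (a :: b :: t) 1 := by
    rw [hy_eq, hK1l, mcm2]
    -- x ≤ 2 K1m + 2 K1t − 1, K1l = a K1m + K1t ≥ K1m + K1t ≥ 2 K1t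
    rw [mcm2] at hx_up
    nlinarith
  have hy_up : wvec (a :: b :: t) 1 ≤ 4 * Mc (a :: b :: t) 0 0 := by
    have hxl1 : 1 ≤ wvec (a :: b :: t) 0 := by
      have := wvec_pos (l := a :: b :: t) (by
        intro x hx; rcases List.mem_cons.mp hx with h | h
        · exact h ▸ ha
        · exact hm x h)
      exact this.1
    rw [hy_eq, hK1l]
    nlinarith
  refine ⟨hx_lo, hx_up4, hy_lo, hy_up, ?_, ?_⟩
  · rw [hK1l]; linarith
  · rw [hK1l]
    have h2 : 1 * Mc (b :: t) 0 0 ≤ (a : ℤ) * Mc (b :: t) 0 0 :=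
      mul_le_mul_of_nonneg_right ha' (by linarith)
    linarith

/-- `Mc` of `(range (n+1)).map a` computes continued fraction denominators. -/
lemma Mc_range (a : ℕ → ℕ) : ∀ n : ℕ,
    Mc ((List.range (n + 1)).map a) 0 0 = (cfDenom a (n + 1) : ℤ) ∧
    Mc ((List.range (n + 1)).map a) 0 1 = (cfDenom a n : ℤ) := by
  intro n
  induction n with
  | zero =>
    constructor <;> simp [Mc, cfDenom, List.range_succ]
  | succ m ih =>
    obtain ⟨ih1, ih2⟩ := ih
    have hr : (List.range (m + 2)).map a = (List.range (m + 1)).map a ++ [a (m + 1)] := by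
      rw [List.range_succ, List.map_append]; simp
    have hM : Mc ((List.range (m + 2)).map a)
        = Mc ((List.range (m + 1)).map a) * !![(a (m + 1) : ℤ), 1; 1, 0] := by
      rw [hr]; simp [Mc]
    constructor
    · rw [hM]
      rw [show (cfDenom a (m + 2) : ℤ) = (a (m + 1) : ℤ) * (cfDenom a (m + 1) : ℤ)
          + (cfDenom a m : ℤ) by rw [cfDenom]; push_cast; ring]
      simp [Matrix.mul_apply, Fin.sum_univ_two, ih1, ih2]; ring
    · rw [hM]
      simp [Matrix.mul_apply, Fin.sum_univ_two, ih1]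

/-- There are absolute constants `0 < c < C` such that for all `n ≥ 3` and all
positive `a₁,…,a_n`: `c qₙ/a₁ ≤ N(𝟏, a₁…a_n) ≤ C qₙ/a₁` and
`c qₙ ≤ N(𝟐, a₁…a_n) ≤ C qₙ`. -/
theorem pathCount_one_two_comparable :
    ∃ c C : ℝ, 0 < c ∧ c < C ∧ ∀ n : ℕ, 3 ≤ n → ∀ a : ℕ → ℕ, (∀ i, 1 ≤ a i) →
      (c * (cfDenom a n : ℝ) / (a 0 : ℝ) ≤ (pathCount 0 ((List.range n).map a) : ℝ) ∧
        (pathCount 0 ((List.range n).map a) : ℝ) ≤ C * (cfDenom a n : ℝ) / (a 0 : ℝ)) ∧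
      (c * (cfDenom a n : ℝ) ≤ (pathCount 1 ((List.range n).map a) : ℝ) ∧
        (pathCount 1 ((List.range n).map a) : ℝ) ≤ C * (cfDenom a n : ℝ)) := by
  refine ⟨1/2, 4, by norm_num, by norm_num, ?_⟩
  intro n hn a hapos
  obtain ⟨m, rfl⟩ : ∃ m, n = m + 2 := ⟨n - 2, by omega⟩
  -- decompose the list
  have hlist : (List.range (m + 2)).map a
      = a 0 :: a 1 :: (List.range m).map (fun i => a (i + 2)) := by
    rw [List.range_succ_eq_map, List.range_succ_eq_map]
    simp [List.map_map, Function.comp_def]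
  have ht : ∀ x ∈ (List.range m).map (fun i => a (i + 2)), 1 ≤ x := by
    intro x hx
    obtain ⟨i, _, rfl⟩ := List.mem_map.mp hx
    exact hapos _
  have htail : a 1 :: (List.range m).map (fun i => a (i + 2))
      = (List.range (m + 1)).map (fun i => a (i + 1)) := by
    rw [List.range_succ_eq_map]
    simp [List.map_map, Function.comp_def]
  obtain ⟨hx_lo, hx_up, hy_lo, hy_up, hK_lo, hK_up⟩ :=
    wvec_bounds (a 0) (a 1) ((List.range m).map (fun i => a (i + 2)))
      (hapos 0) (hapos 1) ht
  -- notation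
  set l := (List.range (m + 2)).map a with hl
  set tl := a 1 :: (List.range m).map (fun i => a (i + 2)) with htl
  rw [← hlist] at hx_lo hx_up hy_lo hy_up hK_lo hK_up
  have hq : Mc l 0 0 = (cfDenom a (m + 2) : ℤ) := (Mc_range a (m + 1)).1
  -- facts
  have hK2pos : 1 ≤ Mc tl 0 0 := by
    refine (Mc_pos ?_).1
    intro x hx
    rcases List.mem_cons.mp hx with h | h
    · exact h ▸ hapos 1
    · exact ht x h
  have hqpos : 1 ≤ Mc l 0 0 := by
    refine (Mc_pos ?_).1
    intro x hx
    obtain ⟨i, _, rfl⟩ := List.mem_map.mp hx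
    exact hapos _
  have hapos0 : (1 : ℤ) ≤ (a 0 : ℤ) := by exact_mod_cast hapos 0
  -- move to ℝ
  have hx_loR : (Mc tl 0 0 : ℝ) ≤ (wvec l 0 : ℝ) := by exact_mod_cast hx_lo
  have hx_upR : (wvec l 0 : ℝ) ≤ 4 * (Mc tl 0 0 : ℝ) := by exact_mod_cast hx_up
  have hy_loR : (Mc l 0 0 : ℝ) ≤ (wvec l 1 : ℝ) := by exact_mod_cast hy_lo
  have hy_upR : (wvec l 1 : ℝ) ≤ 4 * (Mc l 0 0 : ℝ) := by exact_mod_cast hy_up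
  have hK_loR : (a 0 : ℝ) * (Mc tl 0 0 : ℝ) ≤ (Mc l 0 0 : ℝ) := by exact_mod_cast hK_lo
  have hK_upR : (Mc l 0 0 : ℝ) ≤ 2 * (a 0 : ℝ) * (Mc tl 0 0 : ℝ) := by exact_mod_cast hK_up
  have hK2posR : (1 : ℝ) ≤ (Mc tl 0 0 : ℝ) := by exact_mod_cast hK2pos
  have hqposR : (1 : ℝ) ≤ (Mc l 0 0 : ℝ) := by exact_mod_cast hqpos
  have ha0R : (1 : ℝ) ≤ (a 0 : ℝ) := by exact_mod_cast hapos 0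
  have ha0pos : (0 : ℝ) < (a 0 : ℝ) := by linarith
  have hqR : (cfDenom a (m + 2) : ℝ) = (Mc l 0 0 : ℝ) := by
    rw [hq]; push_cast; ring
  have hpc0 : (pathCount 0 l : ℝ) = (wvec l 0 : ℝ) := by rw [pathCount_eq]
  have hpc1 : (pathCount 1 l : ℝ) = (wvec l 1 : ℝ) := by rw [pathCount_eq]
  rw [hpc0, hpc1, hqR]
  refine ⟨⟨?_, ?_⟩, ?_, ?_⟩
  · rw [div_le_iff₀ ha0pos]
    nlinarith
  · rw [le_div_iff₀ ha0pos]
    nlinarith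
  · nlinarith
  · nlinarith
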